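/- With A_n, B_n as in the Heun recurrence and the quasisolution r̃_n(λ) := λ^2(3/(16(n+1)(2n+11)) + 9/(4000 n^2)) + λ((16n+41)/(8(n+1)(2n+11)) - 1/(13n)) + (4n+19)/(4n+22), define C_n(λ) := B_n(λ)/(r̃_n(λ) r̃_{n+1}(λ)). Then for every integer n ≥ 5 and every t ∈ ℝ, |C_n(it)| ≤ (56 + 25n)/(40(4+n)). -/

import Mathlib

set_option maxHeartbeats 2000000

noncomputable def heunB (n : ℕ) (lam : ℂ) : ℂ :=
  -5 * (lam + 2 * (n : ℂ) + 2) * (lam + 2 * (n : ℂ) + 8) /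
    (16 * ((n : ℂ) + 2) * (2 * (n : ℂ) + 13))

/-- The quasisolution `r̃ₙ(λ)`. -/
noncomputable def quasi (n : ℕ) (lam : ℂ) : ℂ :=
  lam ^ 2 * (3 / (16 * ((n : ℂ) + 1) * (2 * (n : ℂ) + 11)) + 9 / (4000 * (n : ℂ) ^ 2))
    + lam * ((16 * (n : ℂ) + 41) / (8 * ((n : ℂ) + 1) * (2 * (n : ℂ) + 11)) - 1 / (13 * (n : ℂ)))
    + (4 * (n : ℂ) + 19) / (4 * (n : ℂ) + 22)

lemma quasi_sq_abs (n : ℕ) (t : ℝ) :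
    ‖quasi n (Complex.I * t)‖^2
      = ((4*(n:ℝ)+19)/(4*(n:ℝ)+22)
            - (3/(16*((n:ℝ)+1)*(2*(n:ℝ)+11)) + 9/(4000*(n:ℝ)^2))*t^2)^2
        + (((16*(n:ℝ)+41)/(8*((n:ℝ)+1)*(2*(n:ℝ)+11)) - 1/(13*(n:ℝ)))*t)^2 := by
  have h : quasi n (Complex.I * t)
      = (((4*(n:ℝ)+19)/(4*(n:ℝ)+22)
            - (3/(16*((n:ℝ)+1)*(2*(n:ℝ)+11)) + 9/(4000*(n:ℝ)^2))*t^2 : ℝ) : ℂ)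
        + ((((16*(n:ℝ)+41)/(8*((n:ℝ)+1)*(2*(n:ℝ)+11)) - 1/(13*(n:ℝ)))*t : ℝ) : ℂ)
            * Complex.I := by
    simp only [quasi, mul_pow, Complex.I_sq]
    push_cast
    ring
  rw [h, Complex.sq_norm, Complex.normSq_add_mul_I]

lemma heunB_sq_abs (n : ℕ) (t : ℝ) :
    ‖heunB n (Complex.I * t)‖^2
      = 25 * (((2*(n:ℝ)+2)^2 + t^2) * ((2*(n:ℝ)+8)^2 + t^2))
          / (16*((n:ℝ)+2)*(2*(n:ℝ)+13))^2 := by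
  have h : heunB n (Complex.I * t)
      = (((2*(n:ℝ)+2 : ℝ) : ℂ) + (t:ℂ)*Complex.I)
        * (((2*(n:ℝ)+8 : ℝ) : ℂ) + (t:ℂ)*Complex.I)
        * (((-5/(16*((n:ℝ)+2)*(2*(n:ℝ)+13)) : ℝ)) : ℂ) := by
    simp only [heunB]
    push_cast
    ring
  rw [h, Complex.sq_norm, map_mul, map_mul, Complex.normSq_add_mul_I,
    Complex.normSq_add_mul_I, Complex.normSq_ofReal]
  have h1 : ((n:ℝ)+2) ≠ 0 := by positivity
  have h2 : (2*(n:ℝ)+13) ≠ 0 := by positivity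
  field_simp
  ring

lemma key3 (x : ℝ) (hx : 5 ≤ x) :
    40000*(4+x)^2*((2*x+2)^2*(4*x+22)^2)*((2*x+8)^2*(4*x+26)^2)
      ≤ (56+25*x)^2*(16*(x+2)*(2*x+13))^2*(4*x+19)^2*(4*x+23)^2 := by
  have hu : (0:ℝ) ≤ x - 5 := by linarith
  nlinarith [pow_nonneg hu 2, pow_nonneg hu 3, pow_nonneg hu 4, pow_nonneg hu 5,
    pow_nonneg hu 6, pow_nonneg hu 7, pow_nonneg hu 8, pow_nonneg hu 9, hu]

lemma key1 (x t : ℝ) (hx : 5 ≤ x) :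
    (4*x+19)^2 * ((2*x+2)^2 + t^2)
      ≤ (2*x+2)^2*(4*x+22)^2 *
        (((4*x+19)/(4*x+22) - (3/(16*(x+1)*(2*x+11)) + 9/(4000*x^2))*t^2)^2
          + (((16*x+41)/(8*(x+1)*(2*x+11)) - 1/(13*x))*t)^2) := by
  have hx0 : x ≠ 0 := by intro h; rw [h] at hx; norm_num at hx
  have h1 : (x:ℝ)+1 ≠ 0 := by intro h; nlinarith
  have h2 : (2*x+11) ≠ 0 := by intro h; nlinarith
  have h4 : (4*x+22) ≠ 0 := by intro h; nlinarith
  have hu : (0:ℝ) ≤ x - 5 := by linarith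
  have hL : (4*x+19)^2 ≤ (2*x+2)^2*(4*x+22)^2 *
      (((16*x+41)/(8*(x+1)*(2*x+11)) - 1/(13*x))^2
        - 2*(3/(16*(x+1)*(2*x+11)) + 9/(4000*x^2))*((4*x+19)/(4*x+22))) := by
    rw [← sub_nonneg]
    have heq : (2*x+2)^2*(4*x+22)^2 *
        (((16*x+41)/(8*(x+1)*(2*x+11)) - 1/(13*x))^2
          - 2*(3/(16*(x+1)*(2*x+11)) + 9/(4000*x^2))*((4*x+19)/(4*x+22))) - (4*x+19)^2
        = (40198862*x^2 - 1231023508*x^3 - 5205074831*x^4 - 7182924814*x^5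
            - 3606918745*x^6 + 15003092*x^7 + 485774892*x^8 + 121796064*x^9
            + 8870656*x^10)
          / (84500 * (x^4*(x+1)^2*(2*x+11)^2)) := by
      field_simp
      ring
    rw [heq]
    apply div_nonneg
    · nlinarith [pow_nonneg hu 2, pow_nonneg hu 3, pow_nonneg hu 4, pow_nonneg hu 5,
        pow_nonneg hu 6, pow_nonneg hu 7, pow_nonneg hu 8, pow_nonneg hu 9,
        pow_nonneg hu 10, hu]
    · positivity
  have hc : (2*x+2)^2*(4*x+22)^2 * ((4*x+19)/(4*x+22))^2 = (4*x+19)^2*(2*x+2)^2 := by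
    field_simp
  nlinarith [mul_le_mul_of_nonneg_right hL (sq_nonneg t), hc,
    mul_nonneg (mul_nonneg (sq_nonneg (2*x+2)) (sq_nonneg (4*x+22)))
      (sq_nonneg ((3/(16*(x+1)*(2*x+11)) + 9/(4000*x^2))*t^2))]

lemma key2 (x t : ℝ) (hx : 5 ≤ x) :
    (4*x+23)^2 * ((2*x+8)^2 + t^2)
      ≤ (2*x+8)^2*(4*x+26)^2 *
        (((4*(x+1)+19)/(4*(x+1)+22)
            - (3/(16*((x+1)+1)*(2*(x+1)+11)) + 9/(4000*(x+1)^2))*t^2)^2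
          + (((16*(x+1)+41)/(8*((x+1)+1)*(2*(x+1)+11)) - 1/(13*(x+1)))*t)^2) := by
  have h1 : (x:ℝ)+1 ≠ 0 := by intro h; nlinarith
  have h2 : (x+1)+1 ≠ 0 := by intro h; nlinarith
  have h3 : (2*(x+1)+11) ≠ 0 := by intro h; nlinarith
  have h4 : (4*(x+1)+22) ≠ 0 := by intro h; nlinarith
  have hu : (0:ℝ) ≤ x - 5 := by linarith
  have hL : (4*x+23)^2 ≤ (2*x+8)^2*(4*x+26)^2 *
      (((16*(x+1)+41)/(8*((x+1)+1)*(2*(x+1)+11)) - 1/(13*(x+1)))^2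
        - 2*(3/(16*((x+1)+1)*(2*(x+1)+11)) + 9/(4000*(x+1)^2))
            *((4*(x+1)+19)/(4*(x+1)+22))) := by
    rw [← sub_nonneg]
    have heq : (2*x+8)^2*(4*x+26)^2 *
        (((16*(x+1)+41)/(8*((x+1)+1)*(2*(x+1)+11)) - 1/(13*(x+1)))^2
          - 2*(3/(16*((x+1)+1)*(2*(x+1)+11)) + 9/(4000*(x+1)^2))
              *((4*(x+1)+19)/(4*(x+1)+22))) - (4*x+23)^2
        = (24435420672 + 178108979672*x + 501351403657*x^2 + 737156422860*x^3
            + 634786168092*x^4 + 338800780012*x^5 + 115678094563*x^6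
            + 25395212708*x^7 + 3469054860*x^8 + 267617248*x^9 + 8870656*x^10)
          / (84500 * ((x+1)^4*((x+1)+1)^2*(2*(x+1)+11)^2)) := by
      field_simp
      ring
    rw [heq]
    apply div_nonneg
    · nlinarith [pow_nonneg hu 2, pow_nonneg hu 3, pow_nonneg hu 4, pow_nonneg hu 5,
        pow_nonneg hu 6, pow_nonneg hu 7, pow_nonneg hu 8, pow_nonneg hu 9,
        pow_nonneg hu 10, hu]
    · positivity
  have hc : (2*x+8)^2*(4*x+26)^2 * ((4*(x+1)+19)/(4*(x+1)+22))^2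
      = (4*x+23)^2*(2*x+8)^2 := by
    field_simp
    ring
  nlinarith [mul_le_mul_of_nonneg_right hL (sq_nonneg t), hc,
    mul_nonneg (mul_nonneg (sq_nonneg (2*x+8)) (sq_nonneg (4*x+26)))
      (sq_nonneg ((3/(16*((x+1)+1)*(2*(x+1)+11)) + 9/(4000*(x+1)^2))*t^2))]

/-- The estimate. -/
theorem Cn_bound_on_imaginary_axis :
    ∀ n : ℕ, 5 ≤ n → ∀ t : ℝ,
      ‖heunB n (Complex.I * t) /
          (quasi n (Complex.I * t) * quasi (n + 1) (Complex.I * t))‖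
        ≤ (56 + 25 * (n : ℝ)) / (40 * (4 + (n : ℝ))) := by
  intro n hn t
  have hx : (5:ℝ) ≤ (n:ℝ) := by exact_mod_cast hn
  rw [norm_div, norm_mul]
  rcases eq_or_lt_of_le
      (mul_nonneg (norm_nonneg (quasi n (Complex.I * t)))
        (norm_nonneg (quasi (n+1) (Complex.I * t)))) with h0 | hpos
  · rw [← h0, div_zero]
    positivity
  · rw [div_le_iff₀ hpos, div_mul_eq_mul_div, le_div_iff₀ (by positivity : (0:ℝ) < 40*(4+(n:ℝ)))]
    -- goal : aB * (40*(4+x)) ≤ (56+25x) * (aq1*aq2)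
    have hQ1 := quasi_sq_abs n t
    have hQ2 := quasi_sq_abs (n+1) t
    push_cast at hQ2
    have k1 : (4*(n:ℝ)+19)^2 * ((2*(n:ℝ)+2)^2 + t^2)
        ≤ (2*(n:ℝ)+2)^2*(4*(n:ℝ)+22)^2 * ‖quasi n (Complex.I * t)‖^2 := by
      rw [hQ1]; exact key1 (n:ℝ) t hx
    have k2 : (4*(n:ℝ)+23)^2 * ((2*(n:ℝ)+8)^2 + t^2)
        ≤ (2*(n:ℝ)+8)^2*(4*(n:ℝ)+26)^2 * ‖quasi (n+1) (Complex.I * t)‖^2 := by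
      rw [hQ2]; exact key2 (n:ℝ) t hx
    have k3 := key3 (n:ℝ) hx
    have hA := heunB_sq_abs n t
    set aB := ‖heunB n (Complex.I * t)‖ with haB
    set q1 := ‖quasi n (Complex.I * t)‖ with hq1
    set q2 := ‖quasi (n+1) (Complex.I * t)‖ with hq2
    have hq1n : 0 ≤ q1 := norm_nonneg _
    have hq2n : 0 ≤ q2 := norm_nonneg _
    have haBn : 0 ≤ aB := norm_nonneg _
    have h12 : ((4*(n:ℝ)+19)^2 * ((2*(n:ℝ)+2)^2 + t^2))
          * ((4*(n:ℝ)+23)^2 * ((2*(n:ℝ)+8)^2 + t^2))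
        ≤ ((2*(n:ℝ)+2)^2*(4*(n:ℝ)+22)^2 * q1^2)
          * ((2*(n:ℝ)+8)^2*(4*(n:ℝ)+26)^2 * q2^2) :=
      mul_le_mul k1 k2 (by positivity) (by positivity)
    have hsq : (aB * (40*(4+(n:ℝ))))^2 ≤ ((56+25*(n:ℝ)) * (q1*q2))^2 := by
      have e1 : (aB * (40*(4+(n:ℝ))))^2 = aB^2 * (40*(4+(n:ℝ)))^2 := by ring
      rw [e1, hA, div_mul_eq_mul_div,
        div_le_iff₀ (by positivity : (0:ℝ) < (16*((n:ℝ)+2)*(2*(n:ℝ)+13))^2)]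
      have hc1 : ((4*(n:ℝ)+19)^2*(4*(n:ℝ)+23)^2)
            * (25 * (((2*(n:ℝ)+2)^2 + t^2) * ((2*(n:ℝ)+8)^2 + t^2)) * (40*(4+(n:ℝ)))^2)
          ≤ ((4*(n:ℝ)+19)^2*(4*(n:ℝ)+23)^2)
            * (((56+25*(n:ℝ)) * (q1*q2))^2 * (16*((n:ℝ)+2)*(2*(n:ℝ)+13))^2) := by
        linarith [mul_le_mul_of_nonneg_left h12
            (by positivity : (0:ℝ) ≤ 40000*(4+(n:ℝ))^2),
          mul_le_mul_of_nonneg_right k3 (by positivity : (0:ℝ) ≤ q1^2*q2^2)]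
      exact le_of_mul_le_mul_left hc1 (by positivity)
    have hY : (0:ℝ) ≤ (56+25*(n:ℝ)) * (q1*q2) :=
      mul_nonneg (by positivity) (mul_nonneg hq1n hq2n)
    have hX : (0:ℝ) ≤ aB * (40*(4+(n:ℝ))) := mul_nonneg haBn (by positivity)
    exact (pow_le_pow_iff_left₀ hX hY two_ne_zero).mp hsq
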